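/- Let (L, ∨, ∧, ', 0, 1) be a bounded lattice with a unary operation satisfying the double negation law (x')' = x, and define x → y := (x' ∧ y') ∨ y (the Sasaki implication). Then (L, ∨, ∧, ') is weakly orthomodular if and only if L satisfies the identities 0' = 1 and (x → 0) → (x ∧ y) = x. -/
import Mathlib


/-- For a bounded lattice with an involution ' and Sasaki implication x → y := (x' ⊓ y') ⊔ y,
weak orthomodularity is equivalent to the identities 0' = 1 and (x → 0) → (x ⊓ y) = x. -/
theorem stmt_10 {L : Type*} [Lattice L] [BoundedOrder L] (f : L → L)
    (dneg : ∀ x : L, f (f x) = x)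
    (impl : L → L → L) (himpl : ∀ x y : L, impl x y = (f x ⊓ f y) ⊔ y) :
    (∀ x y : L, (x ⊓ y) ⊔ (x ⊓ f (x ⊓ y)) = x) ↔
      (f ⊥ = ⊤ ∧ ∀ x y : L, impl (impl x ⊥) (x ⊓ y) = x) := by
  constructor
  · intro wom
    have hfb : f ⊥ = ⊤ := by
      have h := wom ⊤ ⊥
      simpa using h
    refine ⟨hfb, fun x y => ?_⟩
    have h1 : impl x ⊥ = f x := by simp [himpl, hfb]
    rw [himpl, h1, dneg]
    rw [sup_comm]
    exact wom x y
  · rintro ⟨hfb, hid⟩ x y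
    have h := hid x y
    rw [himpl, himpl] at h
    simp [hfb, dneg] at h
    rw [sup_comm]
    exact h
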